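/- arXiv:1401.4934 — 2 statements merged into one kernel-verified Lean document; each statement's English description precedes it below -/
import Mathlib

section
/- For all integers 2 ≤ k ≤ n, the signed Stirling numbers of the first kind satisfy the summation recursion (−1)^{n−k} · s(n,k)/(n−1)! = Σ_{m=k−1}^{n−1} (1/m) · (−1)^{m−(k−1)} · s(m,k−1)/(m−1)!. -/
/-- Signed Stirling numbers of the first kind, defined by `s(0,0)=1`,
`s(n,0)=0` for `n ≥ 1`, `s(0,k)=0` for `k ≥ 1`, and
`s(n+1,k+1) = s(n,k) - n·s(n,k+1)`. -/
def stirling1 : ℕ → ℕ → ℤ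
  | 0, 0 => 1
  | 0, _ + 1 => 0
  | _ + 1, 0 => 0
  | n + 1, k + 1 => stirling1 n k - (n : ℤ) * stirling1 n (k + 1)

lemma stirling1_of_lt : ∀ n k : ℕ, n < k → stirling1 n k = 0 := by
  intro n
  induction n with
  | zero => intro k hk; cases k with
    | zero => omega
    | succ j => simp [stirling1]
  | succ m ih =>
    intro k hk
    cases k with
    | zero => omega
    | succ j =>
      have h1 : m < j := by omega
      simp [stirling1, ih j h1, ih (j+1) (by omega)]

lemma stirling1_self : ∀ n : ℕ, stirling1 n n = 1 := by
  intro n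
  induction n with
  | zero => simp [stirling1]
  | succ m ih => simp [stirling1, ih, stirling1_of_lt m (m+1) (by omega)]

lemma key (j : ℕ) : ∀ d : ℕ,
    (-1 : ℝ) ^ d * (stirling1 (j + 2 + d) (j + 2) : ℝ) / (Nat.factorial (j + 1 + d) : ℝ) =
      ∑ m ∈ Finset.Icc (j + 1) (j + 1 + d),
        (1 / (m : ℝ)) *
          ((-1 : ℝ) ^ (m - (j + 1)) * (stirling1 m (j + 1) : ℝ) /
            (Nat.factorial (m - 1) : ℝ)) := by
  intro d
  induction d with
  | zero =>
    simp only [Nat.add_zero, Finset.Icc_self, Finset.sum_singleton]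
    rw [stirling1_self, stirling1_self]
    have h1 : (j + 1) - (j + 1) = 0 := by omega
    have h2 : (j + 1) - 1 = j := by omega
    rw [h1, h2]
    have hf : (Nat.factorial (j + 1) : ℝ) = (j + 1) * Nat.factorial j := by
      rw [Nat.factorial_succ]; push_cast; ring
    have hj : ((j : ℝ) + 1) ≠ 0 := by positivity
    have hfj : (Nat.factorial j : ℝ) ≠ 0 := by
      exact_mod_cast Nat.factorial_ne_zero j
    rw [hf]
    push_cast
    field_simp
  | succ d ih =>
    have hsum : Finset.Icc (j + 1) (j + 1 + (d + 1)) = Finset.Icc (j + 1) (j + 1 + d + 1) := by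
      ring_nf
    rw [hsum, Finset.sum_Icc_succ_top (by omega)]
    rw [← ih]
    have hrec : stirling1 (j + 2 + (d + 1)) (j + 2)
        = stirling1 (j + 2 + d) (j + 1) - (j + 2 + d : ℤ) * stirling1 (j + 2 + d) (j + 2) := by
      have : j + 2 + (d + 1) = (j + 2 + d) + 1 := by omega
      rw [this]
      show stirling1 ((j + 2 + d) + 1) ((j + 1) + 1) = _
      rw [stirling1]
      push_cast; ring
    rw [hrec]
    have he : (j + 1 + d + 1) - (j + 1) = d + 1 := by omega
    have he2 : (j + 1 + d + 1) - 1 = j + 1 + d := by omega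
    rw [he, he2]
    have hm : j + 1 + d + 1 = j + 2 + d := by omega
    rw [hm]
    have hf : (Nat.factorial (j + 1 + (d + 1)) : ℝ)
        = (j + 2 + d) * Nat.factorial (j + 1 + d) := by
      have : j + 1 + (d + 1) = (j + 1 + d) + 1 := by omega
      rw [this, Nat.factorial_succ]; push_cast; ring
    rw [hf]
    have hne : ((j : ℝ) + 2 + d) ≠ 0 := by positivity
    have hfj : (Nat.factorial (j + 1 + d) : ℝ) ≠ 0 := by
      exact_mod_cast Nat.factorial_ne_zero _
    push_cast
    field_simp
    ring

/-- For `2 ≤ k ≤ n`, the signed Stirling numbers of the first kind satisfy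
`(-1)^{n-k} s(n,k)/(n-1)! = Σ_{m=k-1}^{n-1} (1/m) (-1)^{m-(k-1)} s(m,k-1)/(m-1)!`. -/
theorem stirling1_sum_recursion (n k : ℕ) (h2 : 2 ≤ k) (hkn : k ≤ n) :
    (-1 : ℝ) ^ (n - k) * (stirling1 n k : ℝ) / (Nat.factorial (n - 1) : ℝ) =
      ∑ m ∈ Finset.Icc (k - 1) (n - 1),
        (1 / (m : ℝ)) *
          ((-1 : ℝ) ^ (m - (k - 1)) * (stirling1 m (k - 1) : ℝ) /
            (Nat.factorial (m - 1) : ℝ)) := by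
  obtain ⟨j, rfl⟩ : ∃ j, k = j + 2 := ⟨k - 2, by omega⟩
  obtain ⟨d, rfl⟩ : ∃ d, n = j + 2 + d := ⟨n - (j + 2), by omega⟩
  have h1 : j + 2 + d - (j + 2) = d := by omega
  have h2' : j + 2 + d - 1 = j + 1 + d := by omega
  have h3 : j + 2 - 1 = j + 1 := by omega
  rw [h1, h2', h3]
  exact key j d
end

section
/- For every integer n ≥ 4, the finite sequence k ↦ a_{n,k}, defined for 2 ≤ k ≤ n+1, attains its maximum at some interior index, i.e. there exists an integer k with 2 < k < n+1 such that a_{n,k} ≥ a_{n,j} for all 2 ≤ j ≤ n+1. -/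
/-- `nestedSum j m` is the `j`-fold nested sum
`Σ_{ℓ1=1}^{m} (1/ℓ1) Σ_{ℓ2=1}^{ℓ1-1} (1/ℓ2) ⋯ Σ_{ℓj=1}^{ℓ_{j-1}-1} (1/ℓj)`,
with the empty (`j = 0`) nested sum equal to `1`. -/
noncomputable def nestedSum : ℕ → ℕ → ℝ
  | 0, _ => 1
  | j + 1, m => ∑ l ∈ Finset.Icc 1 m, (1 / (l : ℝ)) * nestedSum j (l - 1)
termination_by j _ => j

/-- The quantity `a_{n,k} = (k-1)!(n-1)!` times the `(k-2)`-fold nested sum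
`Σ_{ℓ1=1}^{n-1} (1/ℓ1) ⋯ Σ_{ℓ_{k-2}=1}^{ℓ_{k-3}-1} (1/ℓ_{k-2})`; in particular
`a_{n,2} = (n-1)!`. -/
noncomputable def a (n k : ℕ) : ℝ :=
  (Nat.factorial (k - 1) : ℝ) * (Nat.factorial (n - 1) : ℝ) * nestedSum (k - 2) (n - 1)

lemma nestedSum_zero (m : ℕ) : nestedSum 0 m = 1 := by rw [nestedSum]
lemma nestedSum_succ (j m : ℕ) :
    nestedSum (j+1) m = ∑ l ∈ Finset.Icc 1 m, (1 / (l : ℝ)) * nestedSum j (l - 1) := by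
  rw [nestedSum]
lemma nestedSum_nonneg : ∀ j m, 0 ≤ nestedSum j m := by
  intro j
  induction j with
  | zero => intro m; rw [nestedSum_zero]; norm_num
  | succ j ih =>
    intro m; rw [nestedSum_succ]
    exact Finset.sum_nonneg fun l _ => mul_nonneg (by positivity) (ih _)
lemma nestedSum_eq_zero : ∀ j m, m < j → nestedSum j m = 0 := by
  intro j
  induction j with
  | zero => intro m h; omega
  | succ j ih =>
    intro m h
    rw [nestedSum_succ]
    exact Finset.sum_eq_zero fun l hl => by
      rw [Finset.mem_Icc] at hl
      rw [ih (l-1) (by omega)]; ring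
lemma nestedSum_diag : ∀ m, nestedSum m m = 1 / (Nat.factorial m : ℝ) := by
  intro m
  induction m with
  | zero => rw [nestedSum_zero]; simp
  | succ m ih =>
    rw [nestedSum_succ, Finset.sum_Icc_succ_top (by omega : 1 ≤ m + 1)]
    rw [Finset.sum_eq_zero (fun l hl => by
      rw [Finset.mem_Icc] at hl
      rw [nestedSum_eq_zero m (l-1) (by omega)]; ring)]
    simp only [Nat.add_sub_cancel, ih, zero_add, Nat.factorial_succ]
    push_cast
    rw [div_mul_div_comm]
    ring
lemma nestedSum_subdiag : ∀ m, nestedSum m (m+1) = ((m : ℝ) + 2) / (2 * (Nat.factorial m : ℝ)) := by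
  intro m
  induction m with
  | zero => rw [nestedSum_zero]; norm_num
  | succ m ih =>
    rw [nestedSum_succ, Finset.sum_Icc_succ_top (by omega : 1 ≤ m + 2),
        Finset.sum_Icc_succ_top (by omega : 1 ≤ m + 1)]
    rw [Finset.sum_eq_zero (fun l hl => by
      rw [Finset.mem_Icc] at hl
      rw [nestedSum_eq_zero m (l-1) (by omega)]; ring)]
    simp only [Nat.add_sub_cancel, zero_add]
    rw [nestedSum_diag m, ih]
    have h1 : (Nat.factorial m : ℝ) ≠ 0 := Nat.cast_ne_zero.2 (Nat.factorial_ne_zero m)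
    have h2 : (Nat.factorial (m+1) : ℝ) = ((m:ℝ)+1) * (Nat.factorial m : ℝ) := by
      rw [Nat.factorial_succ]; push_cast; ring
    rw [h2]; push_cast; field_simp; ring

lemma a_two_le_three (n : ℕ) (hn : 2 ≤ n) : a n 2 ≤ a n 3 := by
  have hfac : (0:ℝ) < (Nat.factorial (n-1) : ℝ) := by
    exact_mod_cast Nat.factorial_pos (n-1)
  have h1 : nestedSum 1 (n-1) ≥ 1 := by
    rw [show (1:ℕ) = 0 + 1 from rfl, nestedSum_succ]
    calc (1:ℝ) = (1 / ((1:ℕ) : ℝ)) * nestedSum 0 (1-1) := by rw [nestedSum_zero]; norm_num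
    _ ≤ _ := Finset.single_le_sum (f := fun l : ℕ => (1 / (l : ℝ)) * nestedSum 0 (l-1))
        (fun l _ => mul_nonneg (by positivity) (nestedSum_nonneg _ _))
        (Finset.mem_Icc.2 ⟨le_refl 1, by omega⟩)
  unfold a
  simp only [show (2:ℕ)-1 = 1 from rfl, show (2:ℕ)-2 = 0 from rfl,
    show (3:ℕ)-1 = 2 from rfl, show (3:ℕ)-2 = 1 from rfl, nestedSum_zero]
  have : (Nat.factorial 1 : ℝ) = 1 := by norm_num [Nat.factorial]
  have h2 : (Nat.factorial 2 : ℝ) = 2 := by norm_num [Nat.factorial]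
  rw [this, h2]
  nlinarith

lemma a_top_le (n : ℕ) (hn : 4 ≤ n) : a n (n+1) ≤ a n n := by
  unfold a
  have e1 : n + 1 - 1 = n := by omega
  have e2 : n + 1 - 2 = n - 1 := by omega
  rw [e1, e2, nestedSum_diag (n-1)]
  have hns : nestedSum (n-2) (n-1) = (n:ℝ) / (2 * (Nat.factorial (n-2) : ℝ)) := by
    have h := nestedSum_subdiag (n-2)
    rw [show (n-2)+1 = n-1 from by omega] at h
    rw [h]
    have hc : ((n-2:ℕ):ℝ) = (n:ℝ) - 2 := by
      push_cast [show 2 ≤ n from by omega]; ring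
    rw [hc]; ring_nf
  rw [hns]
  have hf1 : (Nat.factorial (n-1) : ℝ) = ((n:ℝ)-1) * (Nat.factorial (n-2) : ℝ) := by
    rw [show n-1 = (n-2)+1 from by omega, Nat.factorial_succ]
    have hc : ((n-2:ℕ):ℝ) = (n:ℝ) - 2 := by push_cast [show 2 ≤ n from by omega]; ring
    push_cast; rw [hc]; ring
  have hfn : (Nat.factorial n : ℝ) = (n:ℝ) * ((n:ℝ)-1) * (Nat.factorial (n-2) : ℝ) := by
    have h : Nat.factorial n = n * Nat.factorial (n-1) := by
      conv_lhs => rw [show n = (n-1)+1 from by omega]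
      rw [Nat.factorial_succ]
      congr 1
      omega
    rw [h]
    push_cast [hf1]
    ring
  rw [hf1, hfn]
  have hF : (0:ℝ) < (Nat.factorial (n-2) : ℝ) := by exact_mod_cast Nat.factorial_pos _
  have hn4 : (4:ℝ) ≤ (n:ℝ) := by exact_mod_cast hn
  have hn1 : ((n:ℝ)-1) ≠ 0 := by linarith
  have hFne : (Nat.factorial (n-2) : ℝ) ≠ 0 := ne_of_gt hF
  have lhs_eq : (n:ℝ) * ((n:ℝ)-1) * (Nat.factorial (n-2):ℝ) * (((n:ℝ)-1) * (Nat.factorial (n-2):ℝ)) * (1 / (((n:ℝ)-1) * (Nat.factorial (n-2):ℝ))) = (n:ℝ) * ((n:ℝ)-1) * (Nat.factorial (n-2):ℝ) := by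
    field_simp
  have rhs_eq : ((n:ℝ)-1) * (Nat.factorial (n-2):ℝ) * (((n:ℝ)-1) * (Nat.factorial (n-2):ℝ)) * ((n:ℝ) / (2 * (Nat.factorial (n-2):ℝ))) = (n:ℝ) * ((n:ℝ)-1) * ((n:ℝ)-1) * (Nat.factorial (n-2):ℝ) / 2 := by
    field_simp
  rw [lhs_eq, rhs_eq]
  rw [le_div_iff₀ (by norm_num : (0:ℝ) < 2)]
  nlinarith [mul_nonneg (mul_nonneg (mul_nonneg (by linarith : (0:ℝ) ≤ (n:ℝ)-3) (by linarith : (0:ℝ) ≤ (n:ℝ))) (by linarith : (0:ℝ) ≤ (n:ℝ)-1)) (mul_nonneg hF.le hF.le)]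


/-- For every `n ≥ 4`, the finite sequence `k ↦ a_{n,k}` on `2 ≤ k ≤ n+1` attains
its maximum at some interior index `2 < k < n+1`. -/
theorem a_max_interior (n : ℕ) (hn : 4 ≤ n) :
    ∃ k : ℕ, 2 < k ∧ k < n + 1 ∧ ∀ j : ℕ, 2 ≤ j → j ≤ n + 1 → a n j ≤ a n k := by
  obtain ⟨k, hk, hmax⟩ := Finset.exists_max_image (Finset.Icc 3 n) (a n)
    ⟨3, Finset.mem_Icc.2 ⟨le_refl 3, by omega⟩⟩
  rw [Finset.mem_Icc] at hk
  refine ⟨k, by omega, by omega, ?_⟩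
  intro j hj2 hjn
  rcases eq_or_lt_of_le hj2 with h2 | h3
  · calc a n j = a n 2 := by rw [← h2]
    _ ≤ a n 3 := a_two_le_three n (by omega)
    _ ≤ a n k := hmax 3 (Finset.mem_Icc.2 ⟨le_refl 3, by omega⟩)
  · rcases eq_or_lt_of_le hjn with hj | hj
    · calc a n j = a n (n+1) := by rw [hj]
      _ ≤ a n n := a_top_le n hn
      _ ≤ a n k := hmax n (Finset.mem_Icc.2 ⟨by omega, le_refl n⟩)
    · exact hmax j (Finset.mem_Icc.2 ⟨by omega, by omega⟩)
end
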